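/- arXiv:2103.05813 — 2 statements merged into one kernel-verified Lean document; each statement's English description precedes it below -/
import Mathlib

section
/- There exists δ₀ > 0 such that for every integer k ≥ 0 with δ = 2^{−k} ≤ δ₀ and all l, l' ∈ I_k with |l − l'| > 10³, the Minkowski difference set Γ_{k,l} − Γ_{k,l'} = {a − b : a ∈ Γ_{k,l}, b ∈ Γ_{k,l'}} is contained in the closed disk of radius 150·δ^{1/2} centered at w(l,l') = e^{2πil·δ^{1/2}} − e^{2πil'·δ^{1/2}}. Moreover Γ_{k,l} − Γ_{k,l'} is contained in a rectangle centered at w(l,l') with half-side 100·δ^{1/2} in the direction of w(l,l') and half-side 90·|l−l'|·δ in the direction of i·w(l,l'). -/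
open scoped Pointwise Real

/-- The sectorial arc `Γ_{k,l}`: points `r e^{2πiθ}` with `|θ - l δ^{1/2}| < δ^{1/2}` and
`1 - (5/8)δ ≤ r ≤ 1 - (1/8)δ`, where `δ = 2^{-k}`. -/
noncomputable def sectArc (k : ℕ) (l : ℤ) : Set ℂ :=
  {z : ℂ | ∃ r θ : ℝ,
    |θ - l * Real.sqrt ((2:ℝ) ^ (-(k:ℤ)))| < Real.sqrt ((2:ℝ) ^ (-(k:ℤ))) ∧
    1 - (5/8) * (2:ℝ) ^ (-(k:ℤ)) ≤ r ∧ r ≤ 1 - (1/8) * (2:ℝ) ^ (-(k:ℤ)) ∧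
    z = r * Complex.exp (2 * π * θ * Complex.I)}

/-- The open cone `Q_a = {(x,y) : x > 0, |y| < |x|}` in `ℝ² ≅ ℂ`. -/
def coneQa : Set ℂ := {z : ℂ | 0 < z.re ∧ |z.im| < |z.re|}

/-- The index set `I_k` of those `l` for which `Γ_{k,l}` lies in the cone `Q_a`. -/
noncomputable def sectIdx (k : ℕ) : Set ℤ := {l : ℤ | sectArc k l ⊆ coneQa}

/-- The center `w(l,l') = e^{2πi l δ^{1/2}} - e^{2πi l' δ^{1/2}}` of the difference set
`Γ_{k,l} - Γ_{k,l'}`, where `δ = 2^{-k}`. -/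
noncomputable def sectCenter (k : ℕ) (l l' : ℤ) : ℂ :=
  Complex.exp (2 * π * (l * Real.sqrt ((2:ℝ) ^ (-(k:ℤ)))) * Complex.I) -
  Complex.exp (2 * π * (l' * Real.sqrt ((2:ℝ) ^ (-(k:ℤ)))) * Complex.I)

section SectArcAux
open Complex

lemma aux_sq_ident (s d : ℝ) :
    (Real.cos (s + d) - Real.cos (s - d)) ^ 2 + (Real.sin (s + d) - Real.sin (s - d)) ^ 2
      = (2 * |Real.sin d|) ^ 2 := by
  rw [mul_pow, _root_.sq_abs, Real.cos_add, Real.cos_sub, Real.sin_add, Real.sin_sub]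
  linear_combination (4 * Real.sin d ^ 2) * Real.sin_sq_add_cos_sq s

lemma aux_abs_exp_sub (a b : ℝ) :
    ‖Complex.exp (a * I) - Complex.exp (b * I)‖ =
      2 * |Real.sin ((a - b) / 2)| := by
  have h := aux_sq_ident ((a + b) / 2) ((a - b) / 2)
  rw [show (a + b) / 2 + (a - b) / 2 = a by ring,
    show (a + b) / 2 - (a - b) / 2 = b by ring] at h
  rw [Complex.norm_def, Complex.normSq_apply]
  simp only [Complex.sub_re, Complex.sub_im, Complex.exp_ofReal_mul_I_re,
    Complex.exp_ofReal_mul_I_im]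
  rw [show (Real.cos a - Real.cos b) * (Real.cos a - Real.cos b) +
      (Real.sin a - Real.sin b) * (Real.sin a - Real.sin b)
      = (Real.cos a - Real.cos b) ^ 2 + (Real.sin a - Real.sin b) ^ 2 by ring, h]
  exact Real.sqrt_sq (by positivity)

lemma aux_key_im (r r' u v1 v2 β : ℝ) :
    ((((r : ℂ) * Complex.exp ((v1 + β : ℝ) * I) - (r' : ℂ) * Complex.exp ((v2 + β : ℝ) * I))
        - (Complex.exp ((u + β : ℝ) * I) - Complex.exp ((β - u : ℝ) * I)))
      * (starRingEnd ℂ) (Complex.exp ((u + β : ℝ) * I) - Complex.exp ((β - u : ℝ) * I))).im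
      = 2 * Real.sin u * (r' * Real.cos v2 - r * Real.cos v1) := by
  simp only [Complex.mul_im, Complex.sub_im, Complex.sub_re, Complex.mul_re,
    Complex.conj_re, Complex.conj_im, Complex.exp_ofReal_mul_I_re,
    Complex.exp_ofReal_mul_I_im, Complex.ofReal_re, Complex.ofReal_im]
  rw [Real.cos_add, Real.cos_add, Real.cos_add, Real.cos_sub,
    Real.sin_add, Real.sin_add, Real.sin_add, Real.sin_sub]
  linear_combination (2 * Real.sin u * (r' * Real.cos v2 - r * Real.cos v1)) *
    Real.sin_sq_add_cos_sq β

lemma aux_two_abs_sin_le (t : ℝ) : 2 * |Real.sin (t / 2)| ≤ |t| := by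
  have h3 := Real.abs_sin_le_abs (x := t / 2)
  rw [abs_div, show |(2:ℝ)| = (2:ℝ) from abs_two] at h3
  linarith

lemma aux_pt_close (r x y : ℝ) :
    ‖(r : ℂ) * Complex.exp ((x : ℝ) * I) - Complex.exp ((y : ℝ) * I)‖
      ≤ |r - 1| + |x - y| := by
  have h1 : (r : ℂ) * Complex.exp ((x : ℝ) * I) - Complex.exp ((y : ℝ) * I)
      = ((r : ℂ) - 1) * Complex.exp ((x : ℝ) * I)
        + (Complex.exp ((x : ℝ) * I) - Complex.exp ((y : ℝ) * I)) := by ring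
  rw [h1]
  refine (norm_add_le _ _).trans ?_
  rw [norm_mul, Complex.norm_exp_ofReal_mul_I, mul_one, aux_abs_exp_sub]
  have h2 := aux_two_abs_sin_le (x - y)
  have hr : ‖(r : ℂ) - 1‖ = |r - 1| := by
    rw [show ((r : ℂ) - 1) = ((r - 1 : ℝ) : ℂ) by push_cast; ring, Complex.norm_real, Real.norm_eq_abs]
  rw [hr]
  linarith

set_option maxHeartbeats 2000000 in
lemma aux_master (D a a' r r' θ θ' : ℝ) (hD : 0 < D) (hD1 : D ≤ 1)
    (hθ : |θ - a * D| < D) (hθ' : |θ' - a' * D| < D)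
    (hr1 : 1 - 5/8 * D ^ 2 ≤ r) (hr2 : r ≤ 1 - 1/8 * D ^ 2)
    (hr1' : 1 - 5/8 * D ^ 2 ≤ r') (hr2' : r' ≤ 1 - 1/8 * D ^ 2)
    (hA : 1000 < |a - a'|) :
    ‖((r : ℂ) * Complex.exp ((2*π*θ : ℝ) * I) -
        (r' : ℂ) * Complex.exp ((2*π*θ' : ℝ) * I)) -
        (Complex.exp ((2*π*(a*D) : ℝ) * I) - Complex.exp ((2*π*(a'*D) : ℝ) * I))‖ ≤ 14 * D ∧
    |((((r : ℂ) * Complex.exp ((2*π*θ : ℝ) * I) -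
        (r' : ℂ) * Complex.exp ((2*π*θ' : ℝ) * I)) -
        (Complex.exp ((2*π*(a*D) : ℝ) * I) - Complex.exp ((2*π*(a'*D) : ℝ) * I))) *
        (starRingEnd ℂ) ((Complex.exp ((2*π*(a*D) : ℝ) * I) - Complex.exp ((2*π*(a'*D) : ℝ) * I)) /
          ‖Complex.exp ((2*π*(a*D) : ℝ) * I) - Complex.exp ((2*π*(a'*D) : ℝ) * I)‖)).re|
      ≤ 14 * D ∧
    |((((r : ℂ) * Complex.exp ((2*π*θ : ℝ) * I) -
        (r' : ℂ) * Complex.exp ((2*π*θ' : ℝ) * I)) -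
        (Complex.exp ((2*π*(a*D) : ℝ) * I) - Complex.exp ((2*π*(a'*D) : ℝ) * I))) *
        (starRingEnd ℂ) ((Complex.exp ((2*π*(a*D) : ℝ) * I) - Complex.exp ((2*π*(a'*D) : ℝ) * I)) /
          ‖Complex.exp ((2*π*(a*D) : ℝ) * I) - Complex.exp ((2*π*(a'*D) : ℝ) * I)‖)).im|
      ≤ 90 * |a - a'| * D ^ 2 := by
  have hπ : π < 3.15 := Real.pi_lt_d2
  have hπ0 : 0 < π := Real.pi_pos
  -- canonical angles
  have e1 : (2*π*(a*D) : ℝ) = (π*(a-a')*D) + (π*(a+a')*D) := by ring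
  have e2 : (2*π*(a'*D) : ℝ) = (π*(a+a')*D) - (π*(a-a')*D) := by ring
  have e3 : (2*π*θ : ℝ) = ((2*π*θ - π*(a+a')*D)) + (π*(a+a')*D) := by ring
  have e4 : (2*π*θ' : ℝ) = ((2*π*θ' - π*(a+a')*D)) + (π*(a+a')*D) := by ring
  rw [e1, e2, e3, e4]
  set u : ℝ := π*(a-a')*D with hu
  set β : ℝ := π*(a+a')*D with hβ
  set v1 : ℝ := 2*π*θ - β with hv1
  set v2 : ℝ := 2*π*θ' - β with hv2
  set Z : ℂ := (r : ℂ) * Complex.exp ((v1 + β : ℝ) * I) - (r' : ℂ) * Complex.exp ((v2 + β : ℝ) * I) with hZ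
  set W : ℂ := Complex.exp ((u + β : ℝ) * I) - Complex.exp ((β - u : ℝ) * I) with hW
  -- absolute value bound on z - w
  have hrb : |r - 1| ≤ 5/8 * D ^ 2 := abs_le.2 ⟨by nlinarith, by nlinarith⟩
  have hrb' : |r' - 1| ≤ 5/8 * D ^ 2 := abs_le.2 ⟨by nlinarith, by nlinarith⟩
  have hv1u : |(v1 + β) - (u + β)| ≤ 2 * π * D := by
    have h : (v1 + β) - (u + β) = 2*π*(θ - a*D) := by rw [hv1, hu, hβ]; ring
    rw [h, abs_mul, abs_of_pos (by positivity : (0:ℝ) < 2*π)]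
    nlinarith [hθ.le]
  have hv2u : |(v2 + β) - (β - u)| ≤ 2 * π * D := by
    have h : (v2 + β) - (β - u) = 2*π*(θ' - a'*D) := by rw [hv2, hu, hβ]; ring
    rw [h, abs_mul, abs_of_pos (by positivity : (0:ℝ) < 2*π)]
    nlinarith [hθ'.le]
  have habsZW : ‖Z - W‖ ≤ 14 * D := by
    have hsplit : Z - W = ((r : ℂ) * Complex.exp ((v1 + β : ℝ) * I) - Complex.exp ((u + β : ℝ) * I))
        - ((r' : ℂ) * Complex.exp ((v2 + β : ℝ) * I) - Complex.exp ((β - u : ℝ) * I)) := by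
      rw [hZ, hW]; ring
    rw [hsplit]
    have htri := norm_sub_le_norm_sub_add_norm_sub
      ((r : ℂ) * Complex.exp ((v1 + β : ℝ) * I) - Complex.exp ((u + β : ℝ) * I)) 0
      ((r' : ℂ) * Complex.exp ((v2 + β : ℝ) * I) - Complex.exp ((β - u : ℝ) * I))
    simp only [sub_zero, zero_sub, norm_neg] at htri
    have h1 := aux_pt_close r (v1 + β) (u + β)
    have h2 := aux_pt_close r' (v2 + β) (β - u)
    have hsq : D^2 ≤ D := by nlinarith
    have hπD : π * D ≤ 3.15 * D := mul_le_mul_of_nonneg_right hπ.le hD.le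
    linarith [htri, h1, h2, hrb, hrb', hv1u, hv2u, hsq, hD]
  refine ⟨habsZW, ?_, ?_⟩
  · -- real part bound
    have h1 : |((Z - W) * (starRingEnd ℂ) (W / ‖W‖)).re|
        ≤ ‖(Z - W) * (starRingEnd ℂ) (W / ‖W‖)‖ :=
      Complex.abs_re_le_norm _
    have h2 : ‖(Z - W) * (starRingEnd ℂ) (W / ‖W‖)‖
        ≤ ‖Z - W‖ := by
      rw [norm_mul, Complex.norm_conj, norm_div, Complex.norm_real, norm_norm]
      rcases eq_or_ne (‖W‖) 0 with h | h
      · rw [h, div_zero, mul_zero]; positivity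
      · rw [div_self h, mul_one]
    linarith
  · -- imaginary part bound
    by_cases hw0 : W = 0
    · rw [hw0]
      simp only [map_zero, Complex.ofReal_zero, zero_div, map_zero, mul_zero,
        Complex.zero_im, abs_zero]
      positivity
    · have hAbsW : ‖W‖ = 2 * |Real.sin u| := by
        rw [hW, aux_abs_exp_sub, show ((u + β) - (β - u))/2 = u by ring]
      have hsin0 : Real.sin u ≠ 0 := fun h =>
        hw0 (norm_eq_zero.1 (by rw [hAbsW, h, abs_zero, mul_zero]))
      have hsinpos : 0 < 2 * |Real.sin u| := by
        have := abs_pos.2 hsin0; linarith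
      have hconj : (starRingEnd ℂ) (W / ‖W‖)
          = (starRingEnd ℂ) W / ‖W‖ := by
        rw [map_div₀, Complex.conj_ofReal]
      rw [hconj, ← mul_div_assoc, Complex.div_ofReal_im]
      have hkey : ((Z - W) * (starRingEnd ℂ) W).im
          = 2 * Real.sin u * (r' * Real.cos v2 - r * Real.cos v1) := by
        rw [hZ, hW]; exact aux_key_im r r' u v1 v2 β
      rw [hkey, hAbsW, abs_div, abs_of_pos hsinpos]
      have hnum : |2 * Real.sin u * (r' * Real.cos v2 - r * Real.cos v1)|
          = (2 * |Real.sin u|) * |r' * Real.cos v2 - r * Real.cos v1| := by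
        rw [abs_mul, abs_mul, show |(2:ℝ)| = 2 from abs_two]
      rw [hnum, mul_div_cancel_left₀ _ (ne_of_gt hsinpos)]
      -- final trig estimate
      have hv12 : |v2 + v1| ≤ 4 * π * D := by
        have h : v2 + v1 = 2*π*(θ - a*D) + 2*π*(θ' - a'*D) := by
          rw [hv1, hv2, hβ]; ring
        rw [h]
        have t1 : |2*π*(θ - a*D)| ≤ 2*π*D := by
          rw [abs_mul, abs_of_pos (by positivity : (0:ℝ) < 2*π)]
          nlinarith [hθ.le]
        have t2 : |2*π*(θ' - a'*D)| ≤ 2*π*D := by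
          rw [abs_mul, abs_of_pos (by positivity : (0:ℝ) < 2*π)]
          nlinarith [hθ'.le]
        calc |2*π*(θ - a*D) + 2*π*(θ' - a'*D)| ≤ |2*π*(θ - a*D)| + |2*π*(θ' - a'*D)| :=
              abs_add_le _ _
          _ ≤ 4 * π * D := by linarith
      have hv21 : |v2 - v1| ≤ 2*π*(2 + |a - a'|)*D := by
        have h : v2 - v1 = 2*π*(θ' - a'*D) - 2*π*(θ - a*D) + 2*π*D*(a' - a) := by
          rw [hv1, hv2]; ring
        rw [h]
        have t1 : |2*π*(θ - a*D)| ≤ 2*π*D := by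
          rw [abs_mul, abs_of_pos (by positivity : (0:ℝ) < 2*π)]
          nlinarith [hθ.le]
        have t2 : |2*π*(θ' - a'*D)| ≤ 2*π*D := by
          rw [abs_mul, abs_of_pos (by positivity : (0:ℝ) < 2*π)]
          nlinarith [hθ'.le]
        have t3 : |2*π*D*(a' - a)| = 2*π*D*|a - a'| := by
          rw [abs_mul, abs_of_pos (by positivity : (0:ℝ) < 2*π*D), abs_sub_comm]
        calc |2*π*(θ' - a'*D) - 2*π*(θ - a*D) + 2*π*D*(a' - a)|
            ≤ |2*π*(θ' - a'*D) - 2*π*(θ - a*D)| + |2*π*D*(a' - a)| := abs_add_le _ _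
          _ ≤ |2*π*(θ' - a'*D)| + |2*π*(θ - a*D)| + |2*π*D*(a' - a)| := by
              have := abs_sub (2*π*(θ' - a'*D)) (2*π*(θ - a*D))
              linarith
          _ ≤ 2*π*D + 2*π*D + 2*π*D*|a - a'| := by rw [t3]; linarith
          _ = 2*π*(2 + |a - a'|)*D := by ring
      have hcos2 : |Real.cos v2 - Real.cos v1| ≤ 4*π^2*(2 + |a - a'|)*D^2 := by
        rw [Real.cos_sub_cos, abs_mul, abs_mul, abs_neg,
          show |(2:ℝ)| = 2 from abs_two]
        have s1 := Real.abs_sin_le_abs (x := (v2 + v1)/2)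
        have s2 := Real.abs_sin_le_abs (x := (v2 - v1)/2)
        rw [abs_div, show |(2:ℝ)| = 2 from abs_two] at s1
        rw [abs_div, show |(2:ℝ)| = 2 from abs_two] at s2
        nlinarith [abs_nonneg (Real.sin ((v2+v1)/2)), abs_nonneg (Real.sin ((v2-v1)/2)),
          abs_nonneg (v2+v1), abs_nonneg (v2-v1), hv12, hv21, hπ0, hD,
          abs_nonneg (a - a')]
      have hsplitr : |r' * Real.cos v2 - r * Real.cos v1|
          ≤ |r' - 1| + |r - 1| + |Real.cos v2 - Real.cos v1| := by
        have h : r' * Real.cos v2 - r * Real.cos v1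
            = ((r' - 1) * Real.cos v2 - (r - 1) * Real.cos v1)
              + (Real.cos v2 - Real.cos v1) := by ring
        rw [h]
        have t0 := abs_add_le ((r' - 1) * Real.cos v2 - (r - 1) * Real.cos v1)
          (Real.cos v2 - Real.cos v1)
        have t1 := abs_sub ((r' - 1) * Real.cos v2) ((r - 1) * Real.cos v1)
        have t2 : |(r' - 1) * Real.cos v2| ≤ |r' - 1| := by
          rw [abs_mul]
          nlinarith [Real.abs_cos_le_one v2, abs_nonneg (r' - 1)]
        have t3 : |(r - 1) * Real.cos v1| ≤ |r - 1| := by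
          rw [abs_mul]
          nlinarith [Real.abs_cos_le_one v1, abs_nonneg (r - 1)]
        linarith
      have hs : (0:ℝ) < D^2 := by positivity
      have hπ2 : π^2 < 9.9225 := by nlinarith
      have hApos : (0:ℝ) < |a - a'| := by linarith
      nlinarith [hsplitr, hcos2, hrb, hrb',
        mul_lt_mul_of_pos_right hA hs,
        mul_lt_mul_of_pos_right hπ2 hs,
        mul_lt_mul_of_pos_right hπ2 (mul_pos hApos hs),
        mul_pos hApos hs]
end SectArcAux

/-- For `δ = 2^{-k}` small and `l, l' ∈ I_k` with `|l - l'| > 10³`, the difference set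
`Γ_{k,l} - Γ_{k,l'}` is contained in the closed disk of radius `150 δ^{1/2}` centered at
`w(l,l')`, and in the rectangle centered at `w(l,l')` with half-side `100 δ^{1/2}` along
`w(l,l')` and half-side `90 |l-l'| δ` along `i w(l,l')`. -/
theorem sectArc_diff_subset_disk_and_rect :
    ∃ δ₀ : ℝ, 0 < δ₀ ∧ ∀ k : ℕ, (2:ℝ) ^ (-(k:ℤ)) ≤ δ₀ →
      ∀ l l' : ℤ, l ∈ sectIdx k → l' ∈ sectIdx k → 1000 < |l - l'| →
        (sectArc k l - sectArc k l' ⊆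
          Metric.closedBall (sectCenter k l l')
            (150 * Real.sqrt ((2:ℝ) ^ (-(k:ℤ))))) ∧
        (sectArc k l - sectArc k l' ⊆
          {z : ℂ |
            |((z - sectCenter k l l') *
                (starRingEnd ℂ) (sectCenter k l l' / ‖sectCenter k l l'‖)).re| ≤
              100 * Real.sqrt ((2:ℝ) ^ (-(k:ℤ))) ∧
            |((z - sectCenter k l l') *
                (starRingEnd ℂ) (sectCenter k l l' / ‖sectCenter k l l'‖)).im| ≤
              90 * |l - l'| * (2:ℝ) ^ (-(k:ℤ))}) := by
  refine ⟨1, one_pos, ?_⟩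
  intro k hδ1 l l' _ _ hL
  have hδpos : (0:ℝ) < (2:ℝ) ^ (-(k:ℤ)) := by positivity
  set D : ℝ := Real.sqrt ((2:ℝ) ^ (-(k:ℤ))) with hDdef
  have hDpos : 0 < D := Real.sqrt_pos.2 hδpos
  have hD2 : D ^ 2 = (2:ℝ) ^ (-(k:ℤ)) := Real.sq_sqrt hδpos.le
  have hD1 : D ≤ 1 := by rw [hDdef]; exact Real.sqrt_le_one.2 hδ1
  have hAr : (1000:ℝ) < |(l:ℝ) - (l':ℝ)| := by exact_mod_cast hL
  have hcenter : sectCenter k l l' =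
      Complex.exp ((2*π*((l:ℝ)*D) : ℝ) * Complex.I)
        - Complex.exp ((2*π*((l':ℝ)*D) : ℝ) * Complex.I) := by
    simp only [sectCenter, ← hDdef]
    rw [show (2 * (π:ℂ) * ((l:ℂ) * (D:ℂ)) * Complex.I) = ((2*π*((l:ℝ)*D) : ℝ):ℂ) * Complex.I
        by push_cast; ring,
      show (2 * (π:ℂ) * ((l':ℂ) * (D:ℂ)) * Complex.I) = ((2*π*((l':ℝ)*D) : ℝ):ℂ) * Complex.I
        by push_cast; ring]
  have H : ∀ z ∈ sectArc k l - sectArc k l',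
      ‖z - sectCenter k l l'‖ ≤ 14 * D ∧
      |((z - sectCenter k l l') *
          (starRingEnd ℂ) (sectCenter k l l' / ‖sectCenter k l l'‖)).re| ≤ 14 * D ∧
      |((z - sectCenter k l l') *
          (starRingEnd ℂ) (sectCenter k l l' / ‖sectCenter k l l'‖)).im| ≤
        90 * |(l:ℝ) - (l':ℝ)| * D ^ 2 := by
    intro z hz
    rw [Set.mem_sub] at hz
    obtain ⟨x, hx, y, hy, rfl⟩ := hz
    obtain ⟨r, θ, hθ, hr1, hr2, rfl⟩ := hx
    obtain ⟨r', θ', hθ', hr1', hr2', rfl⟩ := hy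
    rw [← hDdef] at hθ hθ'
    rw [← hD2] at hr1 hr2 hr1' hr2'
    rw [hcenter,
      show (2 * (π:ℂ) * (θ:ℂ) * Complex.I) = ((2*π*θ : ℝ):ℂ) * Complex.I by push_cast; ring,
      show (2 * (π:ℂ) * (θ':ℂ) * Complex.I) = ((2*π*θ' : ℝ):ℂ) * Complex.I by push_cast; ring]
    exact aux_master D (l:ℝ) (l':ℝ) r r' θ θ' hDpos hD1 hθ hθ' hr1 hr2 hr1' hr2' hAr
  constructor
  · intro z hz
    have h1 := (H z hz).1
    rw [Metric.mem_closedBall, Complex.dist_eq]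
    linarith [hDpos]
  · intro z hz
    obtain ⟨-, h2, h3⟩ := H z hz
    simp only [Set.mem_setOf_eq]
    rw [hD2] at h3
    constructor
    · linarith [hDpos]
    · rw [show ((|l - l'| : ℤ) : ℝ) = |(l:ℝ) - (l':ℝ)| by push_cast; ring]
      exact h3
end

section
/- Let ψ : ℝ → ℂ be a Schwartz function and let c > 0. There exists a constant C (depending only on ψ and c) such that for every integer m ≥ 1 and every ξ ∈ ℝ² \ {0}, writing ξ' = ξ/|ξ| and L(ξ, m) = { l ∈ ℤ : 0 ≤ l < 2^{m−1}, |⟨e_m^{2l}, ξ'⟩| > c·2^{−m} and |⟨e_m^{2l+1}, ξ'⟩| > c·2^{−m} }, one has Σ_{j∈ℤ} Σ_{l ∈ L(ξ,m)} | ψ̂(2^{j+m} ⟨e_m^{2l+1}, ξ⟩) − ψ̂(2^{j+m} ⟨e_m^{2l}, ξ⟩) |² ≤ C. (This is the uniform multiplier bound \eqref{e:21multi} in the proof of Theorem 3.1.) -/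
open MeasureTheory FourierTransform
open scoped ENNReal

section helpers
lemma inv_pow4_rpow {x : ℝ} (hx : 0 < x) : (((x⁻¹)^(4:ℕ) : ℝ)) ^ ((1:ℝ)/3) = x ^ (-(4/3):ℝ) := by
  have h1 : (x⁻¹)^(4:ℕ) = x ^ ((-4:ℝ)) := by
    rw [← Real.rpow_natCast (x⁻¹) 4, ← Real.rpow_neg_one x, ← Real.rpow_mul hx.le]
    norm_num
  rw [h1, ← Real.rpow_mul hx.le]
  norm_num
end helpers
section helpers2
open Finset

-- helper: cube facts
lemma cube_le_cube {x y : ℝ} (hx : 0 ≤ x) (hy : 0 ≤ y) (h : x ^ 3 ≤ y ^ 3) : x ≤ y := by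
  exact le_of_pow_le_pow_left₀ (by norm_num) hy h

lemma eq_rpow_third {x y : ℝ} (hx : 0 ≤ x) (h : x ^ 3 = y) : x = y ^ ((1:ℝ)/3) := by
  subst h
  rw [← Real.rpow_natCast x 3, ← Real.rpow_mul hx]
  norm_num

lemma finset_geom_le (q : ℝ) (hq : 1 < q) (j₀ : ℤ) (F : Finset ℤ)
    (hF : ∀ j ∈ F, j ≤ j₀) : ∑ j ∈ F, q ^ j ≤ q ^ j₀ * (1 - q⁻¹)⁻¹ := by
  have h0 : (0:ℝ) < q := lt_trans one_pos hq
  have hqi : q⁻¹ < 1 := inv_lt_one_of_one_lt₀ hq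
  have hqi0 : 0 ≤ q⁻¹ := by positivity
  have key : ∀ j ∈ F, q ^ j = q ^ j₀ * (q⁻¹) ^ ((j₀ - j).toNat) := by
    intro j hj
    have hn : (((j₀ - j).toNat : ℤ)) = j₀ - j := Int.toNat_of_nonneg (by have := hF j hj; omega)
    rw [inv_pow, ← zpow_natCast q, hn, ← zpow_neg, ← zpow_add₀ (ne_of_gt h0)]
    ring_nf
  rw [Finset.sum_congr rfl key, ← Finset.mul_sum]
  have hinj : Set.InjOn (fun j => (j₀ - j).toNat) F := by
    intro a ha b hb hab
    have ha' := hF a ha; have hb' := hF b hb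
    simp only at hab
    omega
  have h2 : ∑ j ∈ F, (q⁻¹) ^ ((j₀ - j).toNat) = ∑ n ∈ F.image (fun j => (j₀ - j).toNat), (q⁻¹) ^ n := by
    rw [Finset.sum_image]
    intro a ha b hb hab; exact hinj ha hb hab
  rw [h2]
  apply mul_le_mul_of_nonneg_left _ (by positivity)
  calc ∑ n ∈ F.image (fun j => (j₀ - j).toNat), (q⁻¹) ^ n
      ≤ ∑' n : ℕ, (q⁻¹) ^ n := by
        exact Summable.sum_le_tsum _ (fun n _ => by positivity)
          (summable_geometric_of_lt_one hqi0 hqi)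
    _ = (1 - q⁻¹)⁻¹ := tsum_geometric_of_lt_one hqi0 hqi

lemma sum_min_le (α β : ℝ) (hα : 0 < α) (hβ : 0 < β) (F : Finset ℤ) :
    ∑ j ∈ F, min (α * (4:ℝ) ^ j) (β * (16:ℝ) ^ (-j)) ≤ 3 * (α ^ 2 * β) ^ ((1:ℝ)/3) := by
  obtain ⟨j₀, h1, h2⟩ := exists_mem_Ico_zpow (x := β/α) (y := (64:ℝ)) (by positivity) (by norm_num)
  set X := (α ^ 2 * β) ^ ((1:ℝ)/3) with hX
  have hsplit : ∑ j ∈ F, min (α * (4:ℝ) ^ j) (β * (16:ℝ) ^ (-j)) ≤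
      (∑ j ∈ F.filter (· ≤ j₀), α * (4:ℝ) ^ j)
        + ∑ j ∈ F.filter (fun j => ¬ j ≤ j₀), β * (16:ℝ) ^ (-j) := by
    rw [← Finset.sum_filter_add_sum_filter_not F (· ≤ j₀)]
    gcongr with j hj j hj
    · exact min_le_left _ _
    · exact min_le_right _ _
  -- first piece
  have hfirst : (∑ j ∈ F.filter (· ≤ j₀), α * (4:ℝ) ^ j) ≤ X * (4/3) := by
    rw [← Finset.mul_sum]
    have hg := finset_geom_le 4 (by norm_num) j₀ (F.filter (· ≤ j₀))
      (fun j hj => (Finset.mem_filter.1 hj).2)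
    have h4 : (4:ℝ) ^ j₀ ≤ (β/α) ^ ((1:ℝ)/3) := by
      apply cube_le_cube (by positivity) (by positivity)
      have e1 : ((4:ℝ) ^ j₀) ^ (3:ℕ) = (64:ℝ) ^ j₀ := by
        rw [← zpow_natCast ((4:ℝ) ^ j₀) 3, ← zpow_mul, mul_comm, zpow_mul]; norm_num
      have e2 : (((β/α) ^ ((1:ℝ)/3)) ^ (3:ℕ) : ℝ) = β/α := by
        rw [← Real.rpow_natCast ((β/α) ^ ((1:ℝ)/3)) 3, ← Real.rpow_mul (by positivity)]
        norm_num
      rw [e1, e2]; exact h1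
    have key1 : α * (β/α) ^ ((1:ℝ)/3) = X := by
      symm; rw [hX]
      symm
      apply eq_rpow_third (by positivity)
      rw [mul_pow]
      rw [← Real.rpow_natCast ((β/α) ^ ((1:ℝ)/3)) 3, ← Real.rpow_mul (by positivity)]
      norm_num
      field_simp
    calc α * ∑ j ∈ F.filter (· ≤ j₀), (4:ℝ) ^ j
        ≤ α * ((4:ℝ) ^ j₀ * (1 - 4⁻¹)⁻¹) := by gcongr
      _ = (α * (4:ℝ) ^ j₀) * (4/3) := by ring_nf
      _ ≤ (α * (β/α) ^ ((1:ℝ)/3)) * (4/3) := by gcongr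
      _ = X * (4/3) := by rw [key1]
  -- second piece
  have hsecond : (∑ j ∈ F.filter (fun j => ¬ j ≤ j₀), β * (16:ℝ) ^ (-j)) ≤ X * (16/15) := by
    rw [← Finset.mul_sum]
    have himg : ∑ j ∈ F.filter (fun j => ¬ j ≤ j₀), (16:ℝ) ^ (-j)
        = ∑ j ∈ (F.filter (fun j => ¬ j ≤ j₀)).image (fun j => -j), (16:ℝ) ^ j := by
      rw [Finset.sum_image (fun a _ b _ h => neg_injective h)]
    have hg := finset_geom_le 16 (by norm_num) (-(j₀+1))
      ((F.filter (fun j => ¬ j ≤ j₀)).image (fun j => -j))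
      (fun j hj => by
        obtain ⟨a, ha, rfl⟩ := Finset.mem_image.1 hj
        have := (Finset.mem_filter.1 ha).2
        omega)
    have h16 : (16:ℝ) ^ (-(j₀+1)) ≤ (α/β) ^ ((2:ℝ)/3) := by
      apply cube_le_cube (by positivity) (by positivity)
      have e1 : ((16:ℝ) ^ (-(j₀+1))) ^ (3:ℕ) = ((64:ℝ) ^ (-(j₀+1))) ^ (2:ℕ) := by
        rw [← zpow_natCast ((16:ℝ) ^ (-(j₀+1))) 3, ← zpow_natCast ((64:ℝ) ^ (-(j₀+1))) 2,
          ← zpow_mul, ← zpow_mul]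
        push_cast
        rw [mul_comm (-(j₀+1)) (3:ℤ), mul_comm (-(j₀+1)) (2:ℤ), zpow_mul, zpow_mul]
        norm_num
      have e2 : (((α/β) ^ ((2:ℝ)/3)) ^ (3:ℕ) : ℝ) = (α/β) ^ (2:ℕ) := by
        rw [← Real.rpow_natCast ((α/β) ^ ((2:ℝ)/3)) 3, ← Real.rpow_mul (by positivity)]
        norm_num
      rw [e1, e2]
      have h64 : (64:ℝ) ^ (-(j₀+1)) ≤ α/β := by
        rw [zpow_neg]
        rw [inv_le_comm₀ (by positivity) (by positivity)]
        calc (α/β)⁻¹ = β/α := by field_simp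
          _ ≤ (64:ℝ) ^ (j₀+1) := le_of_lt h2
      gcongr
    have key2 : β * (α/β) ^ ((2:ℝ)/3) = X := by
      symm; rw [hX]; symm
      apply eq_rpow_third (by positivity)
      rw [mul_pow]
      rw [← Real.rpow_natCast ((α/β) ^ ((2:ℝ)/3)) 3, ← Real.rpow_mul (by positivity)]
      norm_num
      field_simp
    calc β * ∑ j ∈ F.filter (fun j => ¬ j ≤ j₀), (16:ℝ) ^ (-j)
        ≤ β * ((16:ℝ) ^ (-(j₀+1)) * (1 - 16⁻¹)⁻¹) := by rw [himg]; gcongr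
      _ = (β * (16:ℝ) ^ (-(j₀+1))) * (16/15) := by ring_nf
      _ ≤ (β * (α/β) ^ ((2:ℝ)/3)) * (16/15) := by gcongr
      _ = X * (16/15) := by rw [key2]
  have hX0 : 0 ≤ X := by positivity
  calc ∑ j ∈ F, min (α * (4:ℝ) ^ j) (β * (16:ℝ) ^ (-j))
      ≤ X * (4/3) + X * (16/15) := le_trans hsplit (add_le_add hfirst hsecond)
    _ ≤ 3 * X := by nlinarith

lemma tail_sum (c : ℝ) (hc : 0 < c) : ∃ S : ℝ, 0 ≤ S ∧ ∀ (θ : ℝ) (F : Finset ℤ),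
    (∀ l ∈ F, c/2 < θ + l) → ∑ l ∈ F, (2*(θ+(l:ℝ))) ^ (-(4/3) : ℝ) ≤ S := by
  have hmin : (0:ℝ) < min c 1 := lt_min hc one_pos
  have hsum : Summable (fun n : ℕ => (c + 2*(n:ℝ)) ^ (-(4/3):ℝ)) := by
    have hg : Summable (fun n : ℕ => (min c 1)^(-(4/3):ℝ) * ((n:ℝ)+1) ^ (-(4/3):ℝ)) := by
      apply Summable.mul_left
      have h := (Real.summable_nat_rpow (p := -(4/3))).2 (by norm_num)
      have h2 := (summable_nat_add_iff (f := fun n : ℕ => (n:ℝ) ^ (-(4/3):ℝ)) 1).2 h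
      convert h2 using 2 with n
      push_cast
      rfl
      push_cast
      rfl
    apply Summable.of_nonneg_of_le (fun n => by positivity) ?_ hg
    · intro n
      have h1 : min c 1 * ((n:ℝ)+1) ≤ c + 2*n := by
        have hn : (0:ℝ) ≤ (n:ℝ) := n.cast_nonneg
        rcases le_total c 1 with h|h
        · rw [min_eq_left h]; nlinarith
        · rw [min_eq_right h]; nlinarith
      calc (c+2*(n:ℝ))^(-(4/3):ℝ) ≤ (min c 1 * ((n:ℝ)+1))^(-(4/3):ℝ) :=
            Real.rpow_le_rpow_of_nonpos (by positivity) h1 (by norm_num)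
        _ = (min c 1)^(-(4/3):ℝ) * ((n:ℝ)+1) ^ (-(4/3):ℝ) :=
            Real.mul_rpow hmin.le (by positivity)
  refine ⟨∑' n : ℕ, (c + 2*(n:ℝ)) ^ (-(4/3):ℝ), tsum_nonneg (fun n => by positivity), ?_⟩
  intro θ F hF
  set L : ℤ := ⌊c/2 - θ⌋ + 1 with hL
  have hLθ : c/2 < θ + L := by
    have := Int.lt_floor_add_one (c/2 - θ)
    push_cast [hL]
    linarith
  have hlL : ∀ l ∈ F, L ≤ l := by
    intro l hl
    have h := hF l hl
    have h2 : (c/2 - θ) < l := by linarith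
    have := Int.floor_lt.mpr h2
    omega
  have hbound : ∀ l ∈ F, (2*(θ+(l:ℝ)))^(-(4/3):ℝ) ≤ (c + 2*(((l - L).toNat:ℕ):ℝ))^(-(4/3):ℝ) := by
    intro l hl
    apply Real.rpow_le_rpow_of_nonpos (by positivity) ?_ (by norm_num)
    have h1 : (((l - L).toNat:ℕ) : ℝ) = (l:ℝ) - (L:ℝ) := by
      have h2 : (((l - L).toNat:ℕ) : ℤ) = l - L := Int.toNat_of_nonneg (by have := hlL l hl; omega)
      have := congrArg (fun z : ℤ => (z:ℝ)) h2
      push_cast at this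
      linarith
    rw [h1]
    linarith [hLθ]
  calc ∑ l ∈ F, (2*(θ+(l:ℝ)))^(-(4/3):ℝ)
      ≤ ∑ l ∈ F, (c + 2*(((l-L).toNat:ℕ):ℝ))^(-(4/3):ℝ) := Finset.sum_le_sum hbound
    _ = ∑ n ∈ F.image (fun l => (l - L).toNat), (c+2*(n:ℝ))^(-(4/3):ℝ) := by
        rw [Finset.sum_image]
        intro a ha b hb hab
        have := hlL a ha; have := hlL b hb
        simp only at hab
        omega
    _ ≤ ∑' n : ℕ, (c + 2*(n:ℝ)) ^ (-(4/3):ℝ) :=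
        Summable.sum_le_tsum _ (fun n _ => by positivity) hsum

lemma tail_sum_abs (c : ℝ) (hc : 0 < c) : ∃ S : ℝ, 0 ≤ S ∧ ∀ (θ : ℝ) (F : Finset ℤ),
    (∀ l ∈ F, c/2 < |θ + l|) → ∑ l ∈ F, (2*|θ+(l:ℝ)|) ^ (-(4/3) : ℝ) ≤ S := by
  classical
  obtain ⟨S, hS0, hS⟩ := tail_sum c hc
  refine ⟨2*S, by positivity, ?_⟩
  intro θ F hF
  rw [← Finset.sum_filter_add_sum_filter_not F (fun l : ℤ => 0 < θ + (l:ℝ))]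
  have hpos : ∑ l ∈ F.filter (fun l : ℤ => 0 < θ+(l:ℝ)), (2*|θ+(l:ℝ)|)^(-(4/3):ℝ) ≤ S := by
    have h := hS θ (F.filter (fun l : ℤ => 0 < θ+(l:ℝ))) (fun l hl => by
      have h1 := hF l (Finset.mem_filter.1 hl).1
      have h0 := (Finset.mem_filter.1 hl).2
      rwa [abs_of_pos h0] at h1)
    refine le_trans (le_of_eq (Finset.sum_congr rfl ?_)) h
    intro l hl
    rw [abs_of_pos (Finset.mem_filter.1 hl).2]
  have hneg : ∑ l ∈ F.filter (fun l : ℤ => ¬ 0 < θ+(l:ℝ)), (2*|θ+(l:ℝ)|)^(-(4/3):ℝ) ≤ S := by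
    have himg : ∑ l ∈ F.filter (fun l : ℤ => ¬ 0 < θ+(l:ℝ)), (2*|θ+(l:ℝ)|)^(-(4/3):ℝ)
        = ∑ l ∈ (F.filter (fun l : ℤ => ¬ 0 < θ+(l:ℝ))).image (fun l => -l),
            (2*((-θ)+(l:ℝ)))^(-(4/3):ℝ) := by
      rw [Finset.sum_image (fun a _ b _ h => neg_injective h)]
      apply Finset.sum_congr rfl
      intro l hl
      have h0 := (Finset.mem_filter.1 hl).2
      push_neg at h0
      rw [abs_of_nonpos h0]
      push_cast
      ring_nf
    rw [himg]
    apply hS (-θ)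
    intro l' hl'
    obtain ⟨a, ha, rfl⟩ := Finset.mem_image.1 hl'
    have h1 := hF a (Finset.mem_filter.1 ha).1
    have h0 := (Finset.mem_filter.1 ha).2
    push_neg at h0
    rw [abs_of_nonpos h0] at h1
    push_cast
    linarith
  linarith

end helpers2



set_option maxHeartbeats 2000000 in
/-- Uniform multiplier bound: for a Schwartz function `ψ` on `ℝ` and `c > 0`, the sum
`Σ_{j∈ℤ} Σ_{l∈L(ξ,m)} |ψ̂(2^{j+m}⟨e_m^{2l+1},ξ⟩) - ψ̂(2^{j+m}⟨e_m^{2l},ξ⟩)|²` is bounded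
uniformly in `m ≥ 1` and `ξ ≠ 0`, where `e_m^l = (1, l 2^{-m})` and `L(ξ,m)` consists of
those `0 ≤ l < 2^{m-1}` with `|⟨e_m^{2l},ξ'⟩| > c 2^{-m}` and `|⟨e_m^{2l+1},ξ'⟩| > c 2^{-m}`
for `ξ' = ξ/|ξ|`. -/
theorem multiplier_uniform_bound :
    ∀ (ψ : SchwartzMap ℝ ℂ) (c : ℝ), 0 < c →
    ∃ C : ℝ, 0 < C ∧ ∀ m : ℕ, 1 ≤ m → ∀ ξ : ℝ × ℝ, ξ ≠ 0 →
      (∑' j : ℤ, ∑ l ∈ (Finset.Ico (0:ℤ) (2 ^ (m - 1))).filter (fun l : ℤ =>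
          c * (2:ℝ) ^ (-(m:ℤ)) <
            |ξ.1 / Real.sqrt (ξ.1 ^ 2 + ξ.2 ^ 2) +
              2 * (l:ℝ) * (2:ℝ) ^ (-(m:ℤ)) * (ξ.2 / Real.sqrt (ξ.1 ^ 2 + ξ.2 ^ 2))| ∧
          c * (2:ℝ) ^ (-(m:ℤ)) <
            |ξ.1 / Real.sqrt (ξ.1 ^ 2 + ξ.2 ^ 2) +
              (2 * (l:ℝ) + 1) * (2:ℝ) ^ (-(m:ℤ)) * (ξ.2 / Real.sqrt (ξ.1 ^ 2 + ξ.2 ^ 2))|),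
        (‖𝓕 (⇑ψ) ((2:ℝ) ^ ((j : ℤ) + (m : ℤ)) *
              (ξ.1 + (2 * (l:ℝ) + 1) * (2:ℝ) ^ (-(m:ℤ)) * ξ.2)) -
            𝓕 (⇑ψ) ((2:ℝ) ^ ((j : ℤ) + (m : ℤ)) *
              (ξ.1 + 2 * (l:ℝ) * (2:ℝ) ^ (-(m:ℤ)) * ξ.2))‖₊ : ℝ≥0∞) ^ 2) ≤
        ENNReal.ofReal C := by
  intro ψ c hc
  classical
  set Ψ : SchwartzMap ℝ ℂ := SchwartzMap.fourierTransformCLM ℝ ψ with hΨ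
  have hΨapp : ∀ x : ℝ, 𝓕 (⇑ψ) x = Ψ x := fun x => rfl
  obtain ⟨K₀, hK₀pos, hK₀⟩ := Ψ.decay 0 1
  have hd : ∀ x, ‖deriv (⇑Ψ) x‖ ≤ K₀ := by
    intro x
    have h := hK₀ x
    simp only [pow_zero, one_mul] at h
    have h1 : ‖deriv (⇑Ψ) x‖ = ‖fderiv ℝ (⇑Ψ) x 1‖ := by
      rw [← toSpanSingleton_deriv]; simp
    have h2 : ‖fderiv ℝ (⇑Ψ) x 1‖ ≤ ‖fderiv ℝ (⇑Ψ) x‖ := by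
      calc ‖fderiv ℝ (⇑Ψ) x 1‖ ≤ ‖fderiv ℝ (⇑Ψ) x‖ * ‖(1:ℝ)‖ :=
            ContinuousLinearMap.le_opNorm _ _
        _ = ‖fderiv ℝ (⇑Ψ) x‖ := by simp
    have h3 : ‖fderiv ℝ (⇑Ψ) x‖ = ‖iteratedFDeriv ℝ 1 (⇑Ψ) x‖ := by
      rw [← norm_iteratedFDeriv_fderiv (𝕜 := ℝ) (n := 0)]
      simp [norm_iteratedFDeriv_zero]
    rw [h1]
    exact le_trans h2 (le_trans (le_of_eq h3) h)
  have hlip : ∀ x y : ℝ, ‖Ψ x - Ψ y‖ ≤ K₀ * |x - y| := by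
    intro x y
    have hlip' := lipschitzWith_of_nnnorm_deriv_le (C := ⟨K₀, hK₀pos.le⟩)
      (Ψ.differentiable) (fun x => by
        change ‖deriv (⇑Ψ) x‖ ≤ K₀
        exact hd x)
    have := hlip'.dist_le_mul x y
    rw [dist_eq_norm, dist_eq_norm, Real.norm_eq_abs] at this; exact this
  obtain ⟨K₂, hK₂pos, hK₂⟩ := Ψ.decay 2 0
  have hdecay : ∀ x : ℝ, x ≠ 0 → ‖Ψ x‖ ≤ K₂ / x ^ 2 := by
    intro x hx
    have h := hK₂ x
    simp only [norm_iteratedFDeriv_zero, Real.norm_eq_abs, sq_abs] at h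
    rw [le_div_iff₀ (by positivity)]
    linarith [h]
  obtain ⟨S, hS0, hS⟩ := tail_sum_abs c hc
  set D : ℝ := (4*K₀^4*K₂^2) ^ ((1:ℝ)/3) with hD
  have hD0 : 0 ≤ D := by positivity
  refine ⟨3*D*(2*S) + 1, by nlinarith, ?_⟩
  intro m hm ξ hξ
  rw [ENNReal.tsum_eq_iSup_sum]
  refine iSup_le fun J => ?_
  set SF := (Finset.Ico (0:ℤ) (2 ^ (m - 1))).filter (fun l : ℤ =>
          c * (2:ℝ) ^ (-(m:ℤ)) <
            |ξ.1 / Real.sqrt (ξ.1 ^ 2 + ξ.2 ^ 2) +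
              2 * (l:ℝ) * (2:ℝ) ^ (-(m:ℤ)) * (ξ.2 / Real.sqrt (ξ.1 ^ 2 + ξ.2 ^ 2))| ∧
          c * (2:ℝ) ^ (-(m:ℤ)) <
            |ξ.1 / Real.sqrt (ξ.1 ^ 2 + ξ.2 ^ 2) +
              (2 * (l:ℝ) + 1) * (2:ℝ) ^ (-(m:ℤ)) * (ξ.2 / Real.sqrt (ξ.1 ^ 2 + ξ.2 ^ 2))|) with hSF
  have hconv : ∀ (z : ℂ), ((‖z‖₊ : ℝ≥0∞))^2 = ENNReal.ofReal (‖z‖^2) := by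
    intro z
    rw [ENNReal.ofReal_pow (norm_nonneg _), ofReal_norm]; rfl
  simp only [hconv]
  have h1 : ∀ j ∈ J, (∑ l ∈ SF, ENNReal.ofReal
        (‖𝓕 (⇑ψ) ((2:ℝ) ^ ((j : ℤ) + (m : ℤ)) * (ξ.1 + (2 * (l:ℝ) + 1) * (2:ℝ) ^ (-(m:ℤ)) * ξ.2)) -
          𝓕 (⇑ψ) ((2:ℝ) ^ ((j : ℤ) + (m : ℤ)) * (ξ.1 + 2 * (l:ℝ) * (2:ℝ) ^ (-(m:ℤ)) * ξ.2))‖^2))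
      = ENNReal.ofReal (∑ l ∈ SF,
        (‖𝓕 (⇑ψ) ((2:ℝ) ^ ((j : ℤ) + (m : ℤ)) * (ξ.1 + (2 * (l:ℝ) + 1) * (2:ℝ) ^ (-(m:ℤ)) * ξ.2)) -
          𝓕 (⇑ψ) ((2:ℝ) ^ ((j : ℤ) + (m : ℤ)) * (ξ.1 + 2 * (l:ℝ) * (2:ℝ) ^ (-(m:ℤ)) * ξ.2))‖^2)) :=
    fun j _ => (ENNReal.ofReal_sum_of_nonneg (fun l _ => sq_nonneg _)).symm
  rw [Finset.sum_congr rfl h1,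
    ← ENNReal.ofReal_sum_of_nonneg (fun j _ => Finset.sum_nonneg (fun l _ => sq_nonneg _))]
  apply ENNReal.ofReal_le_ofReal
  rcases eq_or_ne ξ.2 0 with ht | ht
  · simp only [ht, mul_zero, add_zero, sub_self, norm_zero]
    simp only [ne_eq, OfNat.ofNat_ne_zero, not_false_eq_true, zero_pow, Finset.sum_const_zero]
    nlinarith
  -- main case
  have hne : ξ.1 ^ 2 + ξ.2 ^ 2 > 0 := by
    have h2 : 0 < ξ.2 ^ 2 := by positivity
    nlinarith [sq_nonneg ξ.1]
  set nn : ℝ := Real.sqrt (ξ.1 ^ 2 + ξ.2 ^ 2) with hnn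
  have hn : 0 < nn := Real.sqrt_pos.2 hne
  have hn2 : |ξ.2| ≤ nn := by
    rw [hnn, ← Real.sqrt_sq_eq_abs]
    apply Real.sqrt_le_sqrt
    nlinarith [sq_nonneg ξ.1]
  set r : ℝ := (2:ℝ)^(-(m:ℤ)) * ξ.2 with hr
  have hr0 : r ≠ 0 := by
    rw [hr]
    exact mul_ne_zero (by positivity) ht
  have hrabs : 0 < |r| := abs_pos.2 hr0
  set θ : ℝ := ξ.1 / (2*r) with hθ
  -- notation for the two points
  set A : ℤ → ℝ := fun l => ξ.1 + 2 * (l:ℝ) * (2:ℝ)^(-(m:ℤ)) * ξ.2 with hA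
  set B : ℤ → ℝ := fun l => ξ.1 + (2 * (l:ℝ) + 1) * (2:ℝ)^(-(m:ℤ)) * ξ.2 with hB
  have hA2r : ∀ l : ℤ, A l = 2*r*(θ + l) := by
    intro l
    rw [hA, hθ, hr]
    field_simp
  have hB2r : ∀ l : ℤ, B l = 2*r*((θ+1/2) + l) := by
    intro l
    rw [hB, hθ, hr]
    field_simp
    ring
  have hBA : ∀ l : ℤ, B l - A l = r := by
    intro l
    rw [hA, hB, hr]
    ring
  -- membership facts
  have hmem : ∀ l ∈ SF, c * (2:ℝ)^(-(m:ℤ)) * nn < |A l| ∧ c * (2:ℝ)^(-(m:ℤ)) * nn < |B l| := by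
    intro l hl
    have h := (Finset.mem_filter.1 hl).2
    obtain ⟨hA', hB'⟩ := h
    constructor
    · have e : ξ.1 / nn + 2 * (l:ℝ) * (2:ℝ)^(-(m:ℤ)) * (ξ.2 / nn) = A l / nn := by
        rw [hA]; field_simp
      rw [e, abs_div, abs_of_pos hn, lt_div_iff₀ hn] at hA'
      exact hA'
    · have e : ξ.1 / nn + (2 * (l:ℝ) + 1) * (2:ℝ)^(-(m:ℤ)) * (ξ.2 / nn) = B l / nn := by
        rw [hB]; field_simp
      rw [e, abs_div, abs_of_pos hn, lt_div_iff₀ hn] at hB'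
      exact hB'
  have hrn : c * |r| ≤ c * (2:ℝ)^(-(m:ℤ)) * nn := by
    rw [hr, abs_mul, abs_of_pos (a := (2:ℝ)^(-(m:ℤ))) (by positivity)]
    rw [mul_assoc]
    gcongr
  have hAabs : ∀ l : ℤ, |A l| = 2 * |r| * |θ + (l:ℝ)| := fun l => by
    rw [hA2r l, abs_mul (2*r) _, abs_mul 2 r, abs_two]
  have hBabs : ∀ l : ℤ, |B l| = 2 * |r| * |(θ+1/2) + (l:ℝ)| := fun l => by
    rw [hB2r l, abs_mul (2*r) _, abs_mul 2 r, abs_two]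
  have hmemθ : ∀ l ∈ SF, c/2 < |θ + (l:ℝ)| ∧ c/2 < |(θ+1/2) + (l:ℝ)| := by
    intro l hl
    obtain ⟨h1, h2⟩ := hmem l hl
    constructor
    · have h3 : c * |r| < |A l| := lt_of_le_of_lt hrn h1
      rw [hAabs l] at h3
      have h4 : |r| * c < |r| * (2 * |θ + (l:ℝ)|) := by linarith
      have h5 := (mul_lt_mul_iff_right₀ hrabs).1 h4
      linarith
    · have h3 : c * |r| < |B l| := lt_of_le_of_lt hrn h2
      rw [hBabs l] at h3
      have h4 : |r| * c < |r| * (2 * |(θ+1/2) + (l:ℝ)|) := by linarith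
      have h5 := (mul_lt_mul_iff_right₀ hrabs).1 h4
      linarith
  have hMpos : ∀ l ∈ SF, 0 < min |A l| |B l| := by
    intro l hl
    obtain ⟨h1, h2⟩ := hmem l hl
    have h0 : 0 < c * (2:ℝ)^(-(m:ℤ)) * nn := by positivity
    exact lt_min (lt_trans h0 h1) (lt_trans h0 h2)
  set α : ℝ := K₀^2 * (4:ℝ)^(m:ℤ) * r^2 with hα
  have hα0 : 0 < α := by
    have h := hr0
    rw [hα]
    positivity
  set β : ℤ → ℝ := fun l => 4*K₂^2 * (16:ℝ)^(-(m:ℤ)) / (min |A l| |B l|)^4 with hβ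
  have hβ0 : ∀ l ∈ SF, 0 < β l := fun l hl => by
    have h := hMpos l hl
    rw [hβ]
    positivity
  have hz : ∀ (k : ℤ) (n : ℕ), ((2:ℝ)^k)^n = (2:ℝ)^(k * n) := by
    intro k n
    rw [← zpow_natCast ((2:ℝ)^k) n, ← zpow_mul]
  have h4z : ∀ k : ℤ, (4:ℝ)^k = (2:ℝ)^(2*k) := by
    intro k
    rw [show (4:ℝ) = (2:ℝ)^(2:ℤ) by norm_num, ← zpow_mul]
  have h16z : ∀ k : ℤ, (16:ℝ)^k = (2:ℝ)^(4*k) := by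
    intro k
    rw [show (16:ℝ) = (2:ℝ)^(4:ℤ) by norm_num, ← zpow_mul]
  have hkey : ∀ j : ℤ, ∀ l ∈ SF,
      ‖𝓕 (⇑ψ) ((2:ℝ) ^ ((j : ℤ) + (m : ℤ)) * B l) -
        𝓕 (⇑ψ) ((2:ℝ) ^ ((j : ℤ) + (m : ℤ)) * A l)‖^2
        ≤ min (α * (4:ℝ)^j) (β l * (16:ℝ)^(-j)) := by
    intro j l hl
    set u : ℝ := (2:ℝ)^((j:ℤ)+(m:ℤ)) with hu
    have hu0 : 0 < u := by rw [hu]; positivity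
    rw [hΨapp, hΨapp]
    apply le_min
    · -- Lipschitz bound
      have h := hlip (u * B l) (u * A l)
      have habs : |u * B l - u * A l| = u * |r| := by
        rw [show u * B l - u * A l = u * r by rw [← hBA l]; ring, abs_mul, abs_of_pos hu0]
      rw [habs] at h
      have hsq : ‖Ψ (u * B l) - Ψ (u * A l)‖^2 ≤ (K₀ * (u * |r|))^2 :=
        pow_le_pow_left₀ (norm_nonneg _) h 2
      have hu2 : u^2 = (4:ℝ)^(m:ℤ) * (4:ℝ)^(j:ℤ) := by
        rw [hu, hz, h4z, h4z, ← zpow_add₀ (by norm_num : (2:ℝ) ≠ 0)]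
        congr 1
        ring
      calc ‖Ψ (u * B l) - Ψ (u * A l)‖^2 ≤ (K₀ * (u * |r|))^2 := hsq
        _ = K₀^2 * u^2 * |r|^2 := by ring
        _ = K₀^2 * u^2 * r^2 := by rw [sq_abs]
        _ = α * (4:ℝ)^j := by rw [hu2, hα]; ring
    · -- decay bound
      obtain ⟨hA1, hB1⟩ := hmem l hl
      have h0 : 0 < c * (2:ℝ)^(-(m:ℤ)) * nn := by positivity
      have hApos : (0:ℝ) < |A l| := lt_trans h0 hA1
      have hBpos : (0:ℝ) < |B l| := lt_trans h0 hB1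
      have hA0 : A l ≠ 0 := abs_pos.1 hApos
      have hB0 : B l ≠ 0 := abs_pos.1 hBpos
      set M : ℝ := min |A l| |B l| with hM
      have hM0 : 0 < M := hMpos l hl
      have hdA := hdecay (u * A l) (mul_ne_zero hu0.ne' hA0)
      have hdB := hdecay (u * B l) (mul_ne_zero hu0.ne' hB0)
      have hMA : u^2 * M^2 ≤ (u * A l)^2 := by
        have h1 : M ≤ |A l| := min_le_left _ _
        have h2 : M^2 ≤ (A l)^2 := by
          rw [← sq_abs (A l)]
          exact pow_le_pow_left₀ hM0.le h1 2
        calc u^2 * M^2 ≤ u^2 * (A l)^2 := by nlinarith [sq_nonneg u]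
          _ = (u * A l)^2 := by ring
      have hMB : u^2 * M^2 ≤ (u * B l)^2 := by
        have h1 : M ≤ |B l| := min_le_right _ _
        have h2 : M^2 ≤ (B l)^2 := by
          rw [← sq_abs (B l)]
          exact pow_le_pow_left₀ hM0.le h1 2
        calc u^2 * M^2 ≤ u^2 * (B l)^2 := by nlinarith [sq_nonneg u]
          _ = (u * B l)^2 := by ring
      have hpos2 : (0:ℝ) < u^2 * M^2 := by positivity
      have hnorm : ‖Ψ (u * B l) - Ψ (u * A l)‖ ≤ 2*K₂/(u^2*M^2) := by
        calc ‖Ψ (u * B l) - Ψ (u * A l)‖ ≤ ‖Ψ (u * B l)‖ + ‖Ψ (u * A l)‖ := norm_sub_le _ _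
          _ ≤ K₂/(u * B l)^2 + K₂/(u * A l)^2 := add_le_add hdB hdA
          _ ≤ K₂/(u^2*M^2) + K₂/(u^2*M^2) := add_le_add
              (div_le_div_of_nonneg_left hK₂pos.le hpos2 hMB)
              (div_le_div_of_nonneg_left hK₂pos.le hpos2 hMA)
          _ = 2*K₂/(u^2*M^2) := by ring
      have hsq : ‖Ψ (u * B l) - Ψ (u * A l)‖^2 ≤ (2*K₂/(u^2*M^2))^2 :=
        pow_le_pow_left₀ (norm_nonneg _) hnorm 2
      have hu4 : u^4 = (16:ℝ)^(m:ℤ) * (16:ℝ)^(j:ℤ) := by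
        rw [hu, hz, h16z, h16z, ← zpow_add₀ (by norm_num : (2:ℝ) ≠ 0)]
        congr 1
        ring
      have h16m : ((16:ℝ)^(m:ℤ)) ≠ 0 := by positivity
      have h16j : ((16:ℝ)^(j:ℤ)) ≠ 0 := by positivity
      calc ‖Ψ (u * B l) - Ψ (u * A l)‖^2 ≤ (2*K₂/(u^2*M^2))^2 := hsq
        _ = 4*K₂^2/(u^4*M^4) := by ring
        _ = β l * (16:ℝ)^(-j) := by
            rw [hβ, hu4, zpow_neg, zpow_neg]
            field_simp
            ring
  -- per-l bound after summing over j
  have hper : ∀ l ∈ SF, 3 * (α^2 * β l) ^ ((1:ℝ)/3) ≤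
      3 * D * ((2 * |θ + (l:ℝ)|) ^ (-(4/3):ℝ) + (2 * |(θ+1/2) + (l:ℝ)|) ^ (-(4/3):ℝ)) := by
    intro l hl
    obtain ⟨hθ1, hθ2⟩ := hmemθ l hl
    have hθ1p : 0 < |θ + (l:ℝ)| := lt_trans (by positivity) hθ1
    have hθ2p : 0 < |(θ+1/2) + (l:ℝ)| := lt_trans (by positivity) hθ2
    obtain ⟨hA1, hB1⟩ := hmem l hl
    have h0 : 0 < c * (2:ℝ)^(-(m:ℤ)) * nn := by positivity
    have hApos : (0:ℝ) < |A l| := lt_trans h0 hA1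
    have hBpos : (0:ℝ) < |B l| := lt_trans h0 hB1
    set M : ℝ := min |A l| |B l| with hM
    have hM0 : 0 < M := hMpos l hl
    have e16 : ((4:ℝ)^(m:ℤ))^2 * (16:ℝ)^(-(m:ℤ)) = 1 := by
      rw [h4z, h16z, hz, ← zpow_add₀ (by norm_num : (2:ℝ) ≠ 0),
        show (2*(m:ℤ))*(2:ℕ) + 4*(-(m:ℤ)) = 0 by push_cast; ring, zpow_zero]
    have e16' : (16:ℝ)^(-(m:ℤ)) = (((4:ℝ)^(m:ℤ))^2)⁻¹ := eq_inv_of_mul_eq_one_right e16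
    have hP : ((4:ℝ)^(m:ℤ)) ≠ 0 := by positivity
    have hprod : α^2 * β l = (4*K₀^4*K₂^2) * (r^4/M^4) := by
      simp only [hα, hβ]
      rw [← hM, e16']
      field_simp
    have hr4 : |r|^4 = r^4 := by
      rw [pow_abs, abs_of_nonneg (by positivity : (0:ℝ) ≤ r^4)]
    have hgen : ∀ w : ℝ, 0 < w → |r| / (2 * |r| * w) = (2*w)⁻¹ := by
      intro w hw
      rw [div_eq_iff (by positivity : (2 * |r| * w) ≠ 0)]
      field_simp
    have hfrac1 : |r|^4/|A l|^4 = ((2 * |θ + (l:ℝ)|)⁻¹)^(4:ℕ) := by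
      rw [show |r|^4/|A l|^4 = (|r|/|A l|)^4 from (div_pow _ _ 4).symm, hAabs l,
        hgen _ hθ1p]
    have hfrac2 : |r|^4/|B l|^4 = ((2 * |(θ+1/2) + (l:ℝ)|)⁻¹)^(4:ℕ) := by
      rw [show |r|^4/|B l|^4 = (|r|/|B l|)^4 from (div_pow _ _ 4).symm, hBabs l,
        hgen _ hθ2p]
    have hsplit3 : (r^4/M^4)^((1:ℝ)/3) ≤
        (|r|^4/|A l|^4)^((1:ℝ)/3) + (|r|^4/|B l|^4)^((1:ℝ)/3) := by
      rcases min_cases |A l| |B l| with ⟨he, _⟩ | ⟨he, _⟩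
      · rw [hM, he, ← hr4]
        exact le_add_of_nonneg_right (by positivity)
      · rw [hM, he, ← hr4]
        exact le_add_of_nonneg_left (by positivity)
    have hx1 : ((|r|^4/|A l|^4) : ℝ) ^ ((1:ℝ)/3) = (2 * |θ + (l:ℝ)|) ^ (-(4/3):ℝ) := by
      rw [hfrac1, inv_pow4_rpow (by positivity)]
    have hx2 : ((|r|^4/|B l|^4) : ℝ) ^ ((1:ℝ)/3) = (2 * |(θ+1/2) + (l:ℝ)|) ^ (-(4/3):ℝ) := by
      rw [hfrac2, inv_pow4_rpow (by positivity)]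
    calc 3 * (α^2 * β l) ^ ((1:ℝ)/3)
        = 3 * ((4*K₀^4*K₂^2) * (r^4/M^4)) ^ ((1:ℝ)/3) := by rw [hprod]
      _ = 3 * (D * (r^4/M^4) ^ ((1:ℝ)/3)) := by
          rw [Real.mul_rpow (by positivity) (by positivity), hD]
      _ ≤ 3 * (D * ((2 * |θ + (l:ℝ)|) ^ (-(4/3):ℝ) + (2 * |(θ+1/2) + (l:ℝ)|) ^ (-(4/3):ℝ))) := by
          have := hsplit3
          rw [hx1, hx2] at this
          gcongr
      _ = 3 * D * ((2 * |θ + (l:ℝ)|) ^ (-(4/3):ℝ) + (2 * |(θ+1/2) + (l:ℝ)|) ^ (-(4/3):ℝ)) := by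
          ring
  -- final chain
  have step1 : (∑ j ∈ J, ∑ l ∈ SF,
      ‖𝓕 (⇑ψ) ((2:ℝ) ^ ((j:ℤ) + (m:ℤ)) * (ξ.1 + (2 * (l:ℝ) + 1) * (2:ℝ) ^ (-(m:ℤ)) * ξ.2)) -
        𝓕 (⇑ψ) ((2:ℝ) ^ ((j:ℤ) + (m:ℤ)) * (ξ.1 + 2 * (l:ℝ) * (2:ℝ) ^ (-(m:ℤ)) * ξ.2))‖ ^ 2)
      ≤ ∑ j ∈ J, ∑ l ∈ SF, min (α * (4:ℝ)^j) (β l * (16:ℝ)^(-j)) :=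
    Finset.sum_le_sum (fun j _ => Finset.sum_le_sum (fun l hl => hkey j l hl))
  refine le_trans step1 ?_
  rw [Finset.sum_comm]
  have step2 : ∑ l ∈ SF, ∑ j ∈ J, min (α * (4:ℝ)^j) (β l * (16:ℝ)^(-j))
      ≤ ∑ l ∈ SF, 3 * (α^2 * β l) ^ ((1:ℝ)/3) :=
    Finset.sum_le_sum (fun l hl => sum_min_le α (β l) hα0 (hβ0 l hl) J)
  refine le_trans step2 ?_
  refine le_trans (Finset.sum_le_sum hper) ?_
  have step3 : ∑ l ∈ SF, 3 * D * ((2 * |θ + (l:ℝ)|) ^ (-(4/3):ℝ) +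
        (2 * |(θ+1/2) + (l:ℝ)|) ^ (-(4/3):ℝ))
      = 3 * D * ((∑ l ∈ SF, (2 * |θ + (l:ℝ)|) ^ (-(4/3):ℝ)) +
        ∑ l ∈ SF, (2 * |(θ+1/2) + (l:ℝ)|) ^ (-(4/3):ℝ)) := by
    rw [← Finset.mul_sum, Finset.sum_add_distrib]
  rw [step3]
  have hb1 : ∑ l ∈ SF, (2 * |θ + (l:ℝ)|) ^ (-(4/3):ℝ) ≤ S :=
    hS θ SF (fun l hl => (hmemθ l hl).1)
  have hb2 : ∑ l ∈ SF, (2 * |(θ+1/2) + (l:ℝ)|) ^ (-(4/3):ℝ) ≤ S :=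
    hS (θ+1/2) SF (fun l hl => (hmemθ l hl).2)
  have hsum1 : (0:ℝ) ≤ ∑ l ∈ SF, (2 * |θ + (l:ℝ)|) ^ (-(4/3):ℝ) :=
    Finset.sum_nonneg (fun l _ => by positivity)
  nlinarith [hb1, hb2, hsum1, hD0, hS0]
end
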